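/- Fix n ≥ 1. In the polynomial ring O_amb = ℤ[a_{ij}, z_j], there is the ideal colon equality (z_1, f_1, ..., f_n) : (z_1, f_1, ..., f_n, Δ_1) = (z_1, ..., z_{n+1}). (The residual of the residual ideal recovers I_D.) -/
import Mathlib


open MvPolynomial

/-- The ambient polynomial ring `O_amb = ℤ[a_{ij}, z_j]`, `1 ≤ i ≤ n`, `1 ≤ j ≤ n+1`. -/
noncomputable abbrev Oamb (n : ℕ) : Type := MvPolynomial ((Fin n × Fin (n+1)) ⊕ Fin (n+1)) ℤ

/-- The generic matrix entry `a_{ij}` as an element of `O_amb`. -/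
noncomputable def av {n : ℕ} (i : Fin n) (j : Fin (n+1)) : Oamb n := X (Sum.inl (i, j))

/-- The variable `z_j` as an element of `O_amb`. -/
noncomputable def zv {n : ℕ} (j : Fin (n+1)) : Oamb n := X (Sum.inr j)

/-- The generic linear form `f_i = Σ_j a_{ij} z_j`. -/
noncomputable def fv {n : ℕ} (i : Fin n) : Oamb n := ∑ j, av i j * zv j

/-- `Δ₁`: the determinant of the `n × n` submatrix of `(a_{ij})` obtained by deleting the
first column. -/
noncomputable def Δ₁ (n : ℕ) : Oamb n := Matrix.det (Matrix.of fun i j : Fin n => av i j.succ)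

/-! ### Auxiliary definitions and lemmas -/

/-- The ideal `I = (z₀, f₁, …, fₙ)`. -/
noncomputable def Iideal (n : ℕ) : Ideal (Oamb n) :=
  Ideal.span (insert (zv 0) (Set.range (fun i : Fin n => fv i)))

/-- The ideal `Z = (z₀, …, zₙ)`. -/
noncomputable def Zideal (n : ℕ) : Ideal (Oamb n) :=
  Ideal.span (Set.range (fun j : Fin (n+1) => zv j))

lemma zv_mem_Z {n : ℕ} (j : Fin (n+1)) : zv j ∈ Zideal n :=
  Ideal.subset_span ⟨j, rfl⟩

lemma fv_eq {n : ℕ} (i : Fin n) :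
    fv i = av i 0 * zv 0 + ∑ k : Fin n, av i k.succ * zv k.succ := by
  rw [fv, Fin.sum_univ_succ]

lemma fv_mem_I {n : ℕ} (i : Fin n) : fv i ∈ Iideal n :=
  Ideal.subset_span (Set.mem_insert_of_mem _ ⟨i, rfl⟩)

lemma zv0_mem_I {n : ℕ} : zv 0 ∈ Iideal n :=
  Ideal.subset_span (Set.mem_insert _ _)

/-- Cramer's rule: `Δ₁ · z_{k+1} ∈ I`. -/
lemma det_mul_zsucc_mem_I {n : ℕ} (k : Fin n) : Δ₁ n * zv k.succ ∈ Iideal n := by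
  set A : Matrix (Fin n) (Fin n) (Oamb n) := Matrix.of fun i j : Fin n => av i j.succ with hA
  set v : Fin n → Oamb n := fun k => zv k.succ with hv
  have key : A.adjugate.mulVec (A.mulVec v) = A.det • v := by
    rw [Matrix.mulVec_mulVec, Matrix.adjugate_mul, Matrix.smul_mulVec,
      Matrix.one_mulVec]
  have hk : Δ₁ n * zv k.succ = ∑ i : Fin n, A.adjugate k i * (A.mulVec v) i := by
    have := congrFun key k
    rw [Matrix.mulVec, dotProduct] at this
    rw [this]
    simp [Δ₁, hA, hv, smul_eq_mul]
  rw [hk]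
  refine Ideal.sum_mem _ fun i _ => ?_
  have hAv : (A.mulVec v) i = fv i - av i 0 * zv 0 := by
    rw [Matrix.mulVec, dotProduct, fv_eq]
    simp [hA, hv]
  rw [hAv]
  exact Ideal.mul_mem_left _ _ (Ideal.sub_mem _ (fv_mem_I i)
    (Ideal.mul_mem_left _ _ zv0_mem_I))

lemma det_mul_zv_mem_I {n : ℕ} (j : Fin (n+1)) : Δ₁ n * zv j ∈ Iideal n := by
  refine Fin.cases ?_ (fun k => det_mul_zsucc_mem_I k) j
  exact Ideal.mul_mem_left _ _ zv0_mem_I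

/-- The algebra endomorphism of `O_amb` killing the `z` variables. -/
noncomputable def πmap (n : ℕ) : Oamb n →ₐ[ℤ] Oamb n :=
  aeval (Sum.elim (fun p => X (Sum.inl p)) (fun _ => 0))

lemma πmap_av {n : ℕ} (i : Fin n) (j : Fin (n+1)) : πmap n (av i j) = av i j := by
  simp [πmap, av]

lemma πmap_zv {n : ℕ} (j : Fin (n+1)) : πmap n (zv j) = 0 := by
  simp [πmap, zv]

lemma sub_πmap_mem_Z {n : ℕ} (w : Oamb n) : w - πmap n w ∈ Zideal n := by
  induction w using MvPolynomial.induction_on with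
  | C r =>
      have : πmap n (C r) = C r := by
        simp [πmap]
      rw [this, sub_self]; exact (Zideal n).zero_mem
  | add p q hp hq =>
      have : p + q - πmap n (p + q) = (p - πmap n p) + (q - πmap n q) := by
        rw [map_add]; ring
      rw [this]; exact Ideal.add_mem _ hp hq
  | mul_X p s hp =>
      cases s with
      | inl a =>
          have hX : πmap n (X (Sum.inl a) : Oamb n) = X (Sum.inl a) := πmap_av a.1 a.2
          have : p * X (Sum.inl a) - πmap n (p * X (Sum.inl a))
              = (p - πmap n p) * X (Sum.inl a) := by
            rw [map_mul, hX]; ring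
          rw [this]; exact Ideal.mul_mem_right _ _ hp
      | inr j =>
          have hX : πmap n (X (Sum.inr j) : Oamb n) = 0 := πmap_zv j
          have : p * X (Sum.inr j) - πmap n (p * X (Sum.inr j)) = p * X (Sum.inr j) := by
            rw [map_mul, hX, mul_zero, sub_zero]
          rw [this]; exact Ideal.mul_mem_left _ _ (zv_mem_Z j)

lemma πmap_fv {n : ℕ} (i : Fin n) : πmap n (fv i) = 0 := by
  rw [fv, map_sum]
  refine Finset.sum_eq_zero fun j _ => ?_
  rw [map_mul, πmap_zv, mul_zero]

lemma I_le_ker_πmap {n : ℕ} : Iideal n ≤ RingHom.ker (πmap n).toRingHom := by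
  rw [Iideal, Ideal.span_le]
  rintro x (rfl | ⟨i, rfl⟩)
  · exact πmap_zv 0
  · exact πmap_fv i

lemma πmap_Δ₁ {n : ℕ} : πmap n (Δ₁ n) = Δ₁ n := by
  rw [Δ₁, AlgHom.map_det]
  congr 1
  ext i j
  simp [AlgHom.mapMatrix_apply, Matrix.map_apply, πmap_av]

lemma Δ₁_ne_zero {n : ℕ} : Δ₁ n ≠ 0 := by
  set ψ : Oamb n →ₐ[ℤ] ℤ :=
    aeval (Sum.elim (fun p : Fin n × Fin (n+1) => if p.2 = p.1.succ then (1:ℤ) else 0)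
      (fun _ => 0)) with hψ
  intro h
  have h1 : ψ (Δ₁ n) = 0 := by rw [h, map_zero]
  have h2 : ψ (Δ₁ n) = 1 := by
    rw [Δ₁, AlgHom.map_det]
    have : ψ.mapMatrix (Matrix.of fun i j : Fin n => av i j.succ) = (1 : Matrix (Fin n) (Fin n) ℤ) := by
      ext i j
      simp only [AlgHom.mapMatrix_apply, Matrix.map_apply, Matrix.of_apply, av, hψ, aeval_X,
        Sum.elim_inl, Matrix.one_apply]
      by_cases hij : i = j
      · simp [hij]
      · rw [if_neg hij, if_neg ?_]
        intro hc
        exact hij (Fin.succ_injective _ hc).symm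
    rw [this, Matrix.det_one]
  rw [h1] at h2
  exact one_ne_zero h2.symm

/-- The colon ideal equality `(z_1, f_1, …, f_n) : (z_1, f_1, …, f_n, Δ₁) = (z_1, …, z_{n+1})`
in `O_amb`: the residual of the residual ideal recovers `I_D`. -/
theorem colon_residual_eq_ID (n : ℕ) (hn : 1 ≤ n) :
    Submodule.colon
        (Ideal.span (insert (zv 0) (Set.range (fun i : Fin n => fv i))))
        (Ideal.span (insert (zv 0) (insert (Δ₁ n) (Set.range (fun i : Fin n => fv i)))))
      = Ideal.span (Set.range (fun j : Fin (n+1) => zv j)) := by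
  apply le_antisymm
  · -- colon ⊆ Z
    intro w hw
    have hΔ : Δ₁ n ∈ Ideal.span (insert (zv 0)
        (insert (Δ₁ n) (Set.range (fun i : Fin n => fv i)))) :=
      Ideal.subset_span (Set.mem_insert_of_mem _ (Set.mem_insert _ _))
    have h1 : w * Δ₁ n ∈ Iideal n := by
      have := Submodule.mem_colon.mp hw (Δ₁ n) hΔ
      rwa [smul_eq_mul] at this
    have h2 : πmap n (w * Δ₁ n) = 0 := I_le_ker_πmap h1
    rw [map_mul, πmap_Δ₁] at h2
    have h3 : πmap n w = 0 := by
      rcases mul_eq_zero.mp h2 with h | h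
      · exact h
      · exact absurd h Δ₁_ne_zero
    have h4 : w - πmap n w ∈ Zideal n := sub_πmap_mem_Z w
    rw [h3, sub_zero] at h4
    exact h4
  · -- Z ⊆ colon
    rw [Ideal.span_le]
    rintro x ⟨j, rfl⟩
    rw [SetLike.mem_coe, Submodule.mem_colon]
    intro p hp
    rw [smul_eq_mul]
    induction hp using Submodule.span_induction with
    | mem q hq =>
        rcases hq with rfl | rfl | ⟨i, rfl⟩
        · exact Ideal.mul_mem_left _ _ zv0_mem_I
        · rw [mul_comm]; exact det_mul_zv_mem_I j
        · exact Ideal.mul_mem_left _ _ (fv_mem_I i)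
    | zero => rw [mul_zero]; exact (Iideal n).zero_mem
    | add q r _ _ hq hr =>
        rw [mul_add]; exact Ideal.add_mem _ hq hr
    | smul a q _ hq =>
        rw [smul_eq_mul, mul_left_comm]
        exact Ideal.mul_mem_left _ _ hq
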